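/- Let w : Fin 2 → ℝ with each w i equal to 1 or −1, let Q be the diagonal quadratic form on Fin 2 → ℝ with weights w, let A = CliffordAlgebra Q, and let conj : A → A denote Clifford conjugation (reversal composed with grade involution). Let a, b, c, x ∈ A satisfy a·x + x·b = c, and set d := a^2 + b·conj b + a·(b + conj b). Then d·x = a·c + c·conj b. -/
import Mathlib

/-- Clifford conjugation: reversal composed with grade involution. -/
noncomputable def cliffordConj {n : ℕ} (w : Fin n → ℝ) :
    CliffordAlgebra (QuadraticMap.weightedSumSquares ℝ w) →
      CliffordAlgebra (QuadraticMap.weightedSumSquares ℝ w) :=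
  fun a => CliffordAlgebra.reverse (CliffordAlgebra.involute a)

open CliffordAlgebra

section Aux
variable (w : Fin 2 → ℝ)

noncomputable abbrev Qw := QuadraticMap.weightedSumSquares ℝ w
noncomputable def cV0 : CliffordAlgebra (Qw w) := ι (Qw w) (Pi.single 0 1)
noncomputable def cV1 : CliffordAlgebra (Qw w) := ι (Qw w) (Pi.single 1 1)

lemma cV0_sq : cV0 w * cV0 w = algebraMap ℝ _ (w 0) := by
  rw [cV0, ι_sq_scalar]
  norm_num [Pi.single_apply, Fin.sum_univ_two]

lemma cV1_sq : cV1 w * cV1 w = algebraMap ℝ _ (w 1) := by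
  rw [cV1, ι_sq_scalar]
  norm_num [Pi.single_apply, Fin.sum_univ_two]

lemma ortho : (Qw w).IsOrtho (Pi.single 0 1) (Pi.single 1 1) := by
  simp [QuadraticMap.isOrtho_def, Pi.single_apply, Fin.sum_univ_two]

lemma cV1_mul_cV0 : cV1 w * cV0 w = -(cV0 w * cV1 w) := by
  exact ι_mul_ι_comm_of_isOrtho ((ortho w).symm)
end Aux

section Aux2
variable (w : Fin 2 → ℝ)
local notation "V0" => cV0 w
local notation "V1" => cV1 w

noncomputable def Sspan : Submodule ℝ (CliffordAlgebra (Qw w)) :=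
  Submodule.span ℝ (Set.range ![1, V0, V1, V0 * V1])

lemma gen_mem (i : Fin 4) : (![1, V0, V1, V0 * V1] : Fin 4 → _) i ∈ Sspan w :=
  Submodule.subset_span ⟨i, rfl⟩

lemma v0v0v1 : V0 * (V0 * V1) = w 0 • V1 := by
  rw [← mul_assoc, cV0_sq, Algebra.algebraMap_eq_smul_one, smul_mul_assoc, one_mul]

lemma v1v0v1 : V1 * (V0 * V1) = -(w 1 • V0) := by
  rw [← mul_assoc, cV1_mul_cV0, neg_mul, mul_assoc, cV1_sq,
    Algebra.algebraMap_eq_smul_one, mul_smul_comm, mul_one]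

lemma v0v1v0 : (V0 * V1) * V0 = -(w 0 • V1) := by
  rw [mul_assoc, cV1_mul_cV0, mul_neg, v0v0v1]

lemma v0v1v1 : (V0 * V1) * V1 = w 1 • V0 := by
  rw [mul_assoc, cV1_sq, Algebra.algebraMap_eq_smul_one, mul_smul_comm, mul_one]

lemma v0v1v0v1 : (V0 * V1) * (V0 * V1) = -((w 0 * w 1) • (1 : CliffordAlgebra (Qw w))) := by
  rw [mul_assoc, ← mul_assoc V1, cV1_mul_cV0, neg_mul, mul_neg, mul_assoc, cV1_sq, ← mul_assoc,
    cV0_sq, Algebra.algebraMap_eq_smul_one, Algebra.algebraMap_eq_smul_one, smul_mul_assoc,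
    one_mul, smul_smul]

lemma one_mem' : (1 : CliffordAlgebra (Qw w)) ∈ Sspan w :=
  Submodule.subset_span (by simp [Matrix.range_cons, Matrix.range_empty])

lemma v0_mem : V0 ∈ Sspan w :=
  Submodule.subset_span (by simp [Matrix.range_cons, Matrix.range_empty])

lemma v1_mem : V1 ∈ Sspan w :=
  Submodule.subset_span (by simp [Matrix.range_cons, Matrix.range_empty])

lemma v0v1_mem : V0 * V1 ∈ Sspan w :=
  Submodule.subset_span (by simp [Matrix.range_cons, Matrix.range_empty])

lemma gen_mul_mem {aa bb : CliffordAlgebra (Qw w)}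
    (ha : aa ∈ Set.range ![1, V0, V1, V0 * V1])
    (hb : bb ∈ Set.range ![1, V0, V1, V0 * V1]) : aa * bb ∈ Sspan w := by
  have h0 := one_mem' w
  have h1 := v0_mem w
  have h2 := v1_mem w
  have h3 := v0v1_mem w
  simp only [Matrix.range_cons, Matrix.range_empty, Set.union_empty, Set.mem_union,
    Set.mem_singleton_iff] at ha hb
  obtain rfl | rfl | rfl | rfl := ha <;> obtain rfl | rfl | rfl | rfl := hb <;>
    (try simp only [one_mul, mul_one, cV0_sq, cV1_sq, cV1_mul_cV0, v0v0v1, v1v0v1, v0v1v0,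
      v0v1v1, v0v1v0v1, Algebra.algebraMap_eq_smul_one]) <;>
    first
      | exact h0 | exact h1 | exact h2 | exact h3
      | exact Submodule.smul_mem _ _ h0
      | exact Submodule.smul_mem _ _ h1
      | exact Submodule.smul_mem _ _ h2
      | exact Submodule.neg_mem _ h3
      | exact Submodule.neg_mem _ (Submodule.smul_mem _ _ h0)
      | exact Submodule.neg_mem _ (Submodule.smul_mem _ _ h1)
      | exact Submodule.neg_mem _ (Submodule.smul_mem _ _ h2)

lemma mul_mem_Sspan {x y : CliffordAlgebra (Qw w)} (hx : x ∈ Sspan w) (hy : y ∈ Sspan w) :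
    x * y ∈ Sspan w := by
  induction hx using Submodule.span_induction with
  | mem a ha =>
    induction hy using Submodule.span_induction with
    | mem b hb => exact gen_mul_mem w ha hb
    | zero => simpa using Submodule.zero_mem (Sspan w)
    | add b c _ _ hb hc => rw [mul_add]; exact Submodule.add_mem _ hb hc
    | smul r b _ hb => rw [mul_smul_comm]; exact Submodule.smul_mem _ _ hb
  | zero => simpa using Submodule.zero_mem (Sspan w)
  | add a b _ _ ha hb => rw [add_mul]; exact Submodule.add_mem _ ha hb
  | smul r a _ ha => rw [smul_mul_assoc]; exact Submodule.smul_mem _ _ ha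

lemma mem_Sspan (x : CliffordAlgebra (Qw w)) : x ∈ Sspan w := by
  induction x using CliffordAlgebra.induction with
  | algebraMap r =>
    rw [Algebra.algebraMap_eq_smul_one]
    exact Submodule.smul_mem _ _ (one_mem' w)
  | ι m =>
    have hm : m = m 0 • (Pi.single 0 1 : Fin 2 → ℝ) + m 1 • (Pi.single 1 1 : Fin 2 → ℝ) := by
      ext i; fin_cases i <;> simp
    rw [hm]; simp only [map_add, LinearMap.map_smul]
    exact Submodule.add_mem _ (Submodule.smul_mem _ _ (v0_mem w))
      (Submodule.smul_mem _ _ (v1_mem w))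
  | mul x y hx hy => exact mul_mem_Sspan w hx hy
  | add x y hx hy => exact Submodule.add_mem _ hx hy

lemma rep (x : CliffordAlgebra (Qw w)) :
    ∃ r : Fin 4 → ℝ, x = r 0 • 1 + r 1 • V0 + r 2 • V1 + r 3 • (V0 * V1) := by
  have h := mem_Sspan w x
  rw [Sspan, Submodule.mem_span_range_iff_exists_fun] at h
  obtain ⟨r, hr⟩ := h
  exact ⟨r, by simpa [Fin.sum_univ_four, add_assoc] using hr.symm⟩

end Aux2

section Aux3
variable (w : Fin 2 → ℝ)
local notation "V0" => cV0 w
local notation "V1" => cV1 w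

lemma conj_one : cliffordConj w 1 = 1 := by simp [cliffordConj]

lemma conj_v0 : cliffordConj w V0 = -V0 := by simp [cliffordConj, cV0]

lemma conj_v1 : cliffordConj w V1 = -V1 := by simp [cliffordConj, cV1]

lemma conj_v0v1 : cliffordConj w (V0 * V1) = -(V0 * V1) := by
  simp [cliffordConj, cV0, cV1]
  exact (cV1_mul_cV0 w)

lemma conj_add (x y : CliffordAlgebra (Qw w)) :
    cliffordConj w (x + y) = cliffordConj w x + cliffordConj w y := by
  simp [cliffordConj]

lemma conj_smul (r : ℝ) (x : CliffordAlgebra (Qw w)) :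
    cliffordConj w (r • x) = r • cliffordConj w x := by
  simp [cliffordConj]

lemma cV0_sq' : V0 * V0 = w 0 • (1 : CliffordAlgebra (Qw w)) := by
  rw [cV0_sq, Algebra.algebraMap_eq_smul_one]

lemma cV1_sq' : V1 * V1 = w 1 • (1 : CliffordAlgebra (Qw w)) := by
  rw [cV1_sq, Algebra.algebraMap_eq_smul_one]

lemma bconj (r0 r1 r2 r3 : ℝ) :
    (r0 • 1 + r1 • V0 + r2 • V1 + r3 • (V0 * V1)) *
      (r0 • 1 - r1 • V0 - r2 • V1 - r3 • (V0 * V1)) =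
    (r0 ^ 2 - r1 ^ 2 * w 0 - r2 ^ 2 * w 1 + r3 ^ 2 * (w 0 * w 1)) •
      (1 : CliffordAlgebra (Qw w)) := by
  simp only [mul_sub, sub_mul, mul_add, add_mul, smul_mul_assoc, mul_smul_comm, smul_smul,
    cV0_sq', cV1_sq', cV1_mul_cV0, v0v0v1, v1v0v1, v0v1v0, v0v1v1, v0v1v0v1, one_mul, mul_one]
  module

end Aux3

lemma aux_ring {A : Type*} [Ring A] [Algebra ℝ A] (a b x : A) (s t : ℝ)
    (hbb : b * b = s • b - t • 1) :
    (a ^ 2 + t • 1 + a * (s • (1 : A))) * x =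
      a * (a * x + x * b) + (a * x + x * b) * (s • 1 - b) := by
  simp only [pow_two, mul_sub, sub_mul, mul_add, add_mul, smul_mul_assoc, mul_smul_comm,
    one_mul, mul_one, mul_assoc, hbb, mul_sub, smul_sub, smul_add]
  abel

theorem clifford2_sylvester_left_necessary (w : Fin 2 → ℝ)
    (hw : ∀ i, w i = 1 ∨ w i = -1)
    (a b c x : CliffordAlgebra (QuadraticMap.weightedSumSquares ℝ w))
    (hx : a * x + x * b = c) :
    (a ^ 2 + b * cliffordConj w b + a * (b + cliffordConj w b)) * x =
      a * c + c * cliffordConj w b := by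
  obtain ⟨r, hb⟩ := rep w b
  set t : ℝ := r 0 ^ 2 - r 1 ^ 2 * w 0 - r 2 ^ 2 * w 1 + r 3 ^ 2 * (w 0 * w 1) with ht
  have hconj : cliffordConj w b =
      r 0 • 1 - r 1 • cV0 w - r 2 • cV1 w - r 3 • (cV0 w * cV1 w) := by
    rw [hb, conj_add, conj_add, conj_add, conj_smul, conj_smul, conj_smul, conj_smul,
      conj_one, conj_v0, conj_v1, conj_v0v1]
    module
  have hn : b * cliffordConj w b = t • 1 := by
    rw [hconj, hb]; exact bconj w _ _ _ _
  have hs : b + cliffordConj w b = (2 * r 0) • 1 := by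
    rw [hconj, hb]; module
  have hc : cliffordConj w b = (2 * r 0) • 1 - b := by
    rw [← hs]; abel
  have h1 := hn
  rw [hc, mul_sub, mul_smul_comm, mul_one] at h1
  have hbb : b * b = (2 * r 0) • b - t • 1 := by
    rw [← h1]; abel
  subst hx
  rw [hn, hs, hc]
  exact aux_ring a b x (2 * r 0) t hbb
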